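/- For all n ∈ ℕ and k ≥ 2, κ(S_n) ≤ s_k(n)² + Σ_{ℓ=k}^{n} κ(S_{n-ℓ})/ℓ², where s_k(n) is the probability that a uniformly random permutation of {1,...,n} has all cycles of length less than k, and κ(S_m) is the probability that two independent uniformly random elements of S_m are conjugate (κ(S_0)=1). -/

import Mathlib

noncomputable def kappa (G : Type*) [Group G] : ℝ :=
  (Nat.card {p : G × G // IsConj p.1 p.2} : ℝ) / (Nat.card G : ℝ) ^ 2

/-- `κ(S_m)`, the probability that two independently uniformly random
permutations of an `m`-set are conjugate. -/
noncomputable def kappaS (m : ℕ) : ℝ := kappa (Equiv.Perm (Fin m))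

/-- The probability that a uniformly random permutation of an `n`-set has all
cycles of length strictly less than `k`. -/
noncomputable def shortCycleProb (k n : ℕ) : ℝ :=
  (Nat.card {σ : Equiv.Perm (Fin n) // ∀ x, Function.minimalPeriod (⇑σ) x < k} : ℝ) /
    Nat.factorial n

open Equiv Equiv.Perm Finset Function

section Helpers
variable {α : Type*} [Fintype α] [DecidableEq α]
lemma minPeriod_eq_card (σ : Equiv.Perm α) {x : α} (hx : x ∈ σ.support) :
    Function.minimalPeriod ⇑σ x = (σ.cycleOf x).support.card := by
  have hmem : x ∈ (σ.cycleOf x).support :=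
    (Equiv.Perm.mem_support_cycleOf_iff).2 ⟨Equiv.Perm.SameCycle.refl _ _, hx⟩
  have hiff : ∀ m : ℕ, Function.IsPeriodicPt ⇑σ m x ↔ (σ.cycleOf x).support.card ∣ m := by
    intro m
    rw [Function.IsPeriodicPt, Function.IsFixedPt, Equiv.Perm.iterate_eq_pow]
    exact (σ.isCycleOn_support_cycleOf x).pow_apply_eq hmem
  refine Nat.dvd_antisymm ?_ ((hiff _).1 (Function.isPeriodicPt_minimalPeriod ⇑σ x))
  rw [← Function.isPeriodicPt_iff_minimalPeriod_dvd]
  exact (hiff _).2 dvd_rfl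

lemma forall_minPeriod_lt_iff {k : ℕ} (hk : 2 ≤ k) (σ : Equiv.Perm α) :
    (∀ x, Function.minimalPeriod (⇑σ) x < k) ↔ ∀ m ∈ σ.cycleType, m < k := by
  constructor
  · intro h m hm
    rw [Equiv.Perm.cycleType_def, Multiset.mem_map] at hm
    obtain ⟨c, hc, hcm⟩ := hm
    have hcyc := (Equiv.Perm.mem_cycleFactorsFinset_iff.1 (by simpa using hc)).1
    obtain ⟨x, hx⟩ : c.support.Nonempty := hcyc.nonempty_support
    have hceq : c = σ.cycleOf x := Equiv.Perm.cycle_is_cycleOf hx (by simpa using hc)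
    have hxσ : x ∈ σ.support := by
      have := (Equiv.Perm.mem_cycleFactorsFinset_iff.1 (by simpa using hc)).2 x hx
      rw [Equiv.Perm.mem_support] at hx
      rw [Equiv.Perm.mem_support, ← this]; exact hx
    have := minPeriod_eq_card σ hxσ
    rw [← hceq] at this
    rw [← hcm]
    simpa [this] using h x
  · intro h x
    by_cases hx : x ∈ σ.support
    · rw [minPeriod_eq_card σ hx]
      apply h
      rw [Equiv.Perm.cycleType_def, Multiset.mem_map]
      exact ⟨σ.cycleOf x, by simpa using Equiv.Perm.cycleOf_mem_cycleFactorsFinset_iff.2 hx, rfl⟩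
    · have : Function.minimalPeriod (⇑σ) x = 1 :=
        Function.minimalPeriod_eq_one_iff_isFixedPt.2 (Equiv.Perm.notMem_support.1 hx)
      omega

end Helpers

section Kc

variable {n ℓ : ℕ}




/-- number of permutations of `Fin n` with cycle type `M` -/
def cnt (n : ℕ) (M : Multiset ℕ) : ℕ :=
  (Finset.univ.filter fun σ : Equiv.Perm (Fin n) => σ.cycleType = M).card

noncomputable def embedPerm (n m : ℕ) (S : Finset (Fin n))
    (f : Equiv.Perm {x : Fin n // x ∉ S}) : Equiv.Perm (Fin m) :=
  if h : Fintype.card {x : Fin n // x ∉ S} = m then (Fintype.equivFinOfCardEq h).permCongr f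
  else 1

noncomputable def recoverFn (n m : ℕ) (S : Finset (Fin n)) (π : Equiv.Perm (Fin m))
    (x : Fin n) : Fin n :=
  if h : Fintype.card {y : Fin n // y ∉ S} = m ∧ x ∉ S then
    ((Fintype.equivFinOfCardEq h.1).symm (π ((Fintype.equivFinOfCardEq h.1) ⟨x, h.2⟩))).val
  else x

lemma recover_embedPerm {m : ℕ} {S : Finset (Fin n)}
    (h : Fintype.card {y : Fin n // y ∉ S} = m) (f : Equiv.Perm {x : Fin n // x ∉ S})
    {x : Fin n} (hx : x ∉ S) :
    recoverFn n m S (embedPerm n m S f) x = (f ⟨x, hx⟩).val := by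
  rw [embedPerm, dif_pos h, recoverFn, dif_pos (⟨h, hx⟩ : _ ∧ _)]
  simp


def gfun (ℓ : ℕ) (σ : Equiv.Perm (Fin n)) (a : Fin n) (j : ℕ) : Fin ℓ → Fin n :=
  fun i => (σ ^ (j + (i : ℕ))) a

variable {σ : Equiv.Perm (Fin n)} {a : Fin n}

lemma ha_supp (h2 : 2 ≤ ℓ) (ha : (σ.cycleOf a).support.card = ℓ) : a ∈ σ.support := by
  have : (σ.cycleOf a).support.Nonempty := Finset.card_pos.1 (by omega)
  rw [Equiv.Perm.mem_support]
  exact Equiv.Perm.support_cycleOf_nonempty.1 this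

lemma hmp_eq (h2 : 2 ≤ ℓ) (ha : (σ.cycleOf a).support.card = ℓ) :
    Function.minimalPeriod ⇑σ a = ℓ :=
  (minPeriod_eq_card σ (ha_supp h2 ha)).trans ha

lemma gfun_inj (h2 : 2 ≤ ℓ) (ha : (σ.cycleOf a).support.card = ℓ) (j : ℕ) :
    Function.Injective (gfun ℓ σ a j) := by
  intro i i' hii
  simp only [gfun, pow_add, Equiv.Perm.mul_apply] at hii
  have h1 := (σ ^ j).injective hii
  have h2' : ((⇑σ)^[(i : ℕ)]) a = ((⇑σ)^[(i' : ℕ)]) a := by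
    simpa [Equiv.Perm.iterate_eq_pow] using h1
  have hmp := hmp_eq h2 ha
  exact Fin.ext (Function.iterate_injOn_Iio_minimalPeriod
    (by rw [hmp]; exact Set.mem_Iio.2 i.isLt) (by rw [hmp]; exact Set.mem_Iio.2 i'.isLt) h2')

lemma gfun_img (h2 : 2 ≤ ℓ) (ha : (σ.cycleOf a).support.card = ℓ) (j : ℕ) :
    Finset.image (gfun ℓ σ a j) Finset.univ = (σ.cycleOf a).support := by
  apply Finset.eq_of_subset_of_card_le
  · intro y hy
    obtain ⟨i, -, rfl⟩ := Finset.mem_image.1 hy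
    refine Equiv.Perm.mem_support_cycleOf_iff.2 ⟨⟨((j + (i : ℕ) : ℕ) : ℤ), ?_⟩, ha_supp h2 ha⟩
    rw [zpow_natCast]; rfl
  · rw [ha, Finset.card_image_of_injective _ (gfun_inj h2 ha j), Finset.card_univ,
      Fintype.card_fin]

lemma gfun_step (h2 : 2 ≤ ℓ) (ha : (σ.cycleOf a).support.card = ℓ) (j : ℕ) (i : Fin ℓ) :
    σ (gfun ℓ σ a j i) =
      gfun ℓ σ a j ⟨((i : ℕ) + 1) % ℓ, Nat.mod_lt _ (by omega)⟩ := by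
  have hmp := hmp_eq h2 ha
  have hmod : (σ ^ (((i : ℕ) + 1) % ℓ)) a = (σ ^ ((i : ℕ) + 1)) a := by
    have := Function.iterate_mod_minimalPeriod_eq (f := ⇑σ) (x := a) (n := (i : ℕ) + 1)
    rw [hmp] at this
    simp only [Equiv.Perm.iterate_eq_pow] at this
    exact this
  show σ ((σ ^ (j + (i : ℕ))) a) = (σ ^ (j + ((i : ℕ) + 1) % ℓ)) a
  calc σ ((σ ^ (j + (i : ℕ))) a) = (σ ^ (j + (i : ℕ) + 1)) a := by
        rw [← Equiv.Perm.mul_apply, ← pow_succ']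
    _ = (σ ^ j) ((σ ^ ((i : ℕ) + 1)) a) := by
        rw [add_assoc, pow_add, Equiv.Perm.mul_apply]
    _ = (σ ^ j) ((σ ^ (((i : ℕ) + 1) % ℓ)) a) := by rw [hmod]
    _ = _ := by rw [← Equiv.Perm.mul_apply, ← pow_add]

def restp (σ : Equiv.Perm (Fin n)) (a : Fin n) : Equiv.Perm (Fin n) := σ * (σ.cycleOf a)⁻¹

lemma restp_fix {y : Fin n} (hy : y ∈ (σ.cycleOf a).support) : restp σ a y = y := by
  have h1 : (σ.cycleOf a)⁻¹ y ∈ (σ.cycleOf a).support := by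
    rw [← Equiv.Perm.support_inv] at hy ⊢
    exact (Equiv.Perm.apply_mem_support).2 hy
  have hz : σ.SameCycle a ((σ.cycleOf a)⁻¹ y) :=
    (Equiv.Perm.mem_support_cycleOf_iff.1 h1).1
  show σ ((σ.cycleOf a)⁻¹ y) = y
  have hc : σ.cycleOf a ((σ.cycleOf a)⁻¹ y) = σ ((σ.cycleOf a)⁻¹ y) := by
    rw [Equiv.Perm.cycleOf_apply, if_pos hz]
  rw [← hc, ← Equiv.Perm.mul_apply, mul_inv_cancel, Equiv.Perm.one_apply]

lemma restp_mem (σ : Equiv.Perm (Fin n)) (a : Fin n) :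
    ∀ x : Fin n, x ∉ (σ.cycleOf a).support ↔ restp σ a x ∉ (σ.cycleOf a).support := by
  intro x
  constructor
  · intro hx hmem
    have h1 : restp σ a (restp σ a x) = restp σ a x := restp_fix hmem
    have h2 := (restp σ a).injective h1
    exact hx (h2 ▸ hmem)
  · intro hx hmem
    exact hx (by rw [restp_fix hmem]; exact hmem)

def restSub (σ : Equiv.Perm (Fin n)) (a : Fin n) :
    Equiv.Perm {x : Fin n // x ∉ (σ.cycleOf a).support} :=
  (restp σ a).subtypePerm (fun x => (restp_mem σ a x).symm)

lemma card_compl_subtype (ha : (σ.cycleOf a).support.card = ℓ) :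
    Fintype.card {x : Fin n // x ∉ (σ.cycleOf a).support} = n - ℓ := by
  rw [Fintype.card_subtype]
  have : (Finset.univ.filter fun x => x ∉ (σ.cycleOf a).support) =
      ((σ.cycleOf a).support)ᶜ := by
    ext x; simp
  rw [this, Finset.card_compl, ha, Fintype.card_fin]

end Kc

section Kc2

variable {n ℓ : ℕ} {σ : Equiv.Perm (Fin n)} {a : Fin n}

lemma cycleType_permCongr' {α β : Type*} [Fintype α] [DecidableEq α] [Fintype β] [DecidableEq β]
    (e : α ≃ β) (g : Equiv.Perm α) : (e.permCongr g).cycleType = g.cycleType := by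
  have h : e.permCongr g = g.extendDomain (e.trans (Equiv.subtypeUnivEquiv
      (fun _ : β => trivial : ∀ x : β, (fun _ => True) x)).symm) := by
    ext b
    rw [Equiv.Perm.extendDomain_apply_subtype _ _ (trivial : (fun _ => True) b)]
    simp [Equiv.subtypeUnivEquiv]
  rw [h, Equiv.Perm.cycleType_extendDomain]

noncomputable def piPerm (m : ℕ) (σ : Equiv.Perm (Fin n)) (a : Fin n) : Equiv.Perm (Fin m) :=
  embedPerm n m (σ.cycleOf a).support (restSub σ a)

lemma piPerm_cycleType (h2 : 2 ≤ ℓ) (ha : (σ.cycleOf a).support.card = ℓ) :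
    (piPerm (n - ℓ) σ a).cycleType = σ.cycleType.erase ℓ := by
  have hcard := card_compl_subtype (ℓ := ℓ) (σ := σ) (a := a) ha
  rw [piPerm, embedPerm, dif_pos hcard, cycleType_permCongr']
  have h1 : Equiv.Perm.ofSubtype (restSub σ a) = restp σ a := by
    apply Equiv.Perm.ofSubtype_subtypePerm
    intro x hx
    intro hmem
    exact hx (restp_fix hmem)
  have h2' : (restSub σ a).cycleType = (restp σ a).cycleType := by
    rw [← h1, Equiv.Perm.cycleType_ofSubtype]
  rw [h2']
  have hmem : σ.cycleOf a ∈ σ.cycleFactorsFinset :=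
    Equiv.Perm.cycleOf_mem_cycleFactorsFinset_iff.2 (ha_supp h2 ha)
  have h3 : (restp σ a).cycleType = σ.cycleType - (σ.cycleOf a).cycleType :=
    Equiv.Perm.cycleType_mul_inv_mem_cycleFactorsFinset_eq_sub hmem
  have h4 : (σ.cycleOf a).cycleType = {ℓ} := by
    have hcyc : (σ.cycleOf a).IsCycle :=
      Equiv.Perm.isCycle_cycleOf σ (Equiv.Perm.mem_support.1 (ha_supp h2 ha))
    rw [hcyc.cycleType, ha]
  rw [h3, h4, Multiset.sub_singleton]

lemma recover_sigma (h2 : 2 ≤ ℓ) (ha : (σ.cycleOf a).support.card = ℓ) {x : Fin n}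
    (hx : x ∉ (σ.cycleOf a).support) :
    recoverFn n (n - ℓ) (σ.cycleOf a).support (piPerm (n - ℓ) σ a) x = σ x := by
  rw [piPerm, recover_embedPerm (card_compl_subtype ha) _ hx]
  show restp σ a x = σ x
  have hfix : (σ.cycleOf a)⁻¹ x = x := by
    rw [← Equiv.Perm.support_inv] at hx
    exact Equiv.Perm.notMem_support.1 hx
  show σ ((σ.cycleOf a)⁻¹ x) = σ x
  rw [hfix]

lemma exists_pt (hσℓ : ℓ ∈ σ.cycleType) (h2 : 2 ≤ ℓ) :
    ∃ x : Fin n, (σ.cycleOf x).support.card = ℓ := by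
  rw [Equiv.Perm.cycleType_def, Multiset.mem_map] at hσℓ
  obtain ⟨c, hc, hcm⟩ := hσℓ
  have hc' : c ∈ σ.cycleFactorsFinset := by simpa using hc
  have hcyc := (Equiv.Perm.mem_cycleFactorsFinset_iff.1 hc').1
  obtain ⟨x, hx⟩ : c.support.Nonempty := hcyc.nonempty_support
  have hceq : c = σ.cycleOf x := Equiv.Perm.cycle_is_cycleOf hx hc'
  exact ⟨x, by rw [← hceq]; exact hcm⟩

lemma key_count (n ℓ : ℕ) (h2 : 2 ≤ ℓ) (M : Multiset ℕ) (hM : ℓ ∈ M) :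
    ℓ * cnt n M ≤ n.descFactorial ℓ * cnt (n - ℓ) (M.erase ℓ) := by
  classical
  have hlpos : 0 < ℓ := by omega
  have hAne : ∀ τ : {σ : Equiv.Perm (Fin n) // σ.cycleType = M},
      ∃ x : Fin n, (τ.1.cycleOf x).support.card = ℓ := fun τ =>
    exists_pt (show ℓ ∈ τ.1.cycleType from τ.2.symm ▸ hM) h2
  let pt : {σ : Equiv.Perm (Fin n) // σ.cycleType = M} → Fin n := fun τ =>
    (Finset.univ.filter fun x => (τ.1.cycleOf x).support.card = ℓ).min'
      (by obtain ⟨x, hx⟩ := hAne τ; exact ⟨x, by simp [hx]⟩)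
  have hpt : ∀ τ : {σ : Equiv.Perm (Fin n) // σ.cycleType = M},
      ((τ.1.cycleOf (pt τ)).support).card = ℓ := by
    intro τ
    have := Finset.min'_mem (Finset.univ.filter fun x => (τ.1.cycleOf x).support.card = ℓ)
      (by obtain ⟨x, hx⟩ := hAne τ; exact ⟨x, by simp [hx]⟩)
    simpa using this
  let Φ : Fin ℓ × {σ : Equiv.Perm (Fin n) // σ.cycleType = M} →
      (Fin ℓ ↪ Fin n) × {π : Equiv.Perm (Fin (n - ℓ)) // π.cycleType = M.erase ℓ} := fun p =>
    (⟨gfun ℓ p.2.1 (pt p.2) (p.1 : ℕ), gfun_inj h2 (hpt p.2) _⟩,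
     ⟨piPerm (n - ℓ) p.2.1 (pt p.2), by rw [piPerm_cycleType h2 (hpt p.2), p.2.2]⟩)
  have hΦinj : Function.Injective Φ := by
    rintro ⟨j, σ, hσ⟩ ⟨j', σ', hσ'⟩ hp
    have hg : gfun ℓ σ (pt ⟨σ, hσ⟩) (j : ℕ) = gfun ℓ σ' (pt ⟨σ', hσ'⟩) (j' : ℕ) := by
      have := congrArg (fun q => (q.1 : Fin ℓ → Fin n)) hp
      simpa [Φ] using this
    have hπ : piPerm (n - ℓ) σ (pt ⟨σ, hσ⟩) = piPerm (n - ℓ) σ' (pt ⟨σ', hσ'⟩) := by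
      have := congrArg (fun q => (q.2 : {π : Equiv.Perm (Fin (n - ℓ)) //
        π.cycleType = M.erase ℓ}).1) hp
      simpa [Φ] using this
    have hS : (σ.cycleOf (pt ⟨σ, hσ⟩)).support = (σ'.cycleOf (pt ⟨σ', hσ'⟩)).support := by
      rw [← gfun_img h2 (hpt ⟨σ, hσ⟩) (j : ℕ), ← gfun_img h2 (hpt ⟨σ', hσ'⟩) (j' : ℕ), hg]
    have hσσ : σ = σ' := by
      apply Equiv.ext
      intro x
      by_cases hx : x ∈ (σ.cycleOf (pt ⟨σ, hσ⟩)).support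
      · rw [← gfun_img h2 (hpt ⟨σ, hσ⟩) (j : ℕ)] at hx
        obtain ⟨i, -, rfl⟩ := Finset.mem_image.1 hx
        rw [gfun_step h2 (hpt ⟨σ, hσ⟩) _ i, hg, gfun_step h2 (hpt ⟨σ', hσ'⟩) _ i]
      · have hx' : x ∉ (σ'.cycleOf (pt ⟨σ', hσ'⟩)).support := hS ▸ hx
        rw [← recover_sigma h2 (hpt ⟨σ, hσ⟩) hx, ← recover_sigma h2 (hpt ⟨σ', hσ'⟩) hx',
          hS, hπ]
    subst hσσ
    have haa : pt ⟨σ, hσ⟩ = pt ⟨σ, hσ'⟩ := rfl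
    have hj : j = j' := by
      have h0 := congrFun hg ⟨0, hlpos⟩
      simp only [gfun, Nat.add_zero] at h0
      have h0' : ((⇑σ)^[(j : ℕ)]) (pt ⟨σ, hσ⟩) = ((⇑σ)^[(j' : ℕ)]) (pt ⟨σ, hσ⟩) := by
        simpa [Equiv.Perm.iterate_eq_pow, haa] using h0
      have hmp := hmp_eq h2 (hpt ⟨σ, hσ⟩)
      exact Fin.ext (Function.iterate_injOn_Iio_minimalPeriod
        (by rw [hmp]; exact Set.mem_Iio.2 j.isLt) (by rw [hmp]; exact Set.mem_Iio.2 j'.isLt) h0')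
    subst hj
    rfl
  calc ℓ * cnt n M
      = Fintype.card (Fin ℓ × {σ : Equiv.Perm (Fin n) // σ.cycleType = M}) := by
        simp [cnt, Fintype.card_subtype]
    _ ≤ Fintype.card ((Fin ℓ ↪ Fin n) ×
        {π : Equiv.Perm (Fin (n - ℓ)) // π.cycleType = M.erase ℓ}) :=
        Fintype.card_le_of_injective Φ hΦinj
    _ = n.descFactorial ℓ * cnt (n - ℓ) (M.erase ℓ) := by
        simp [cnt, Fintype.card_subtype, Fintype.card_embedding_eq]

end Kc2

section Assembly

open scoped Classical

def Tn (m : ℕ) : Finset (Multiset ℕ) :=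
  (Finset.univ : Finset (Equiv.Perm (Fin m))).image Equiv.Perm.cycleType

lemma cnt_eq_zero_of_not_mem {m : ℕ} {M : Multiset ℕ} (h : M ∉ Tn m) : cnt m M = 0 := by
  rw [cnt, Finset.card_eq_zero, Finset.filter_eq_empty_iff]
  intro σ _
  intro hσ
  exact h (Finset.mem_image.2 ⟨σ, Finset.mem_univ _, hσ⟩)

lemma conj_pairs (m : ℕ) :
    Nat.card {p : Equiv.Perm (Fin m) × Equiv.Perm (Fin m) // IsConj p.1 p.2} =
      ∑ M ∈ Tn m, (cnt m M) ^ 2 := by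
  rw [Nat.card_eq_fintype_card, Fintype.card_subtype]
  rw [Finset.card_eq_sum_card_fiberwise (f := fun p => p.1.cycleType) (t := Tn m)
    (fun p _ => Finset.mem_image.2 ⟨p.1, Finset.mem_univ _, rfl⟩)]
  apply Finset.sum_congr rfl
  intro M _
  have hpr : (Finset.univ.filter fun p : Equiv.Perm (Fin m) × Equiv.Perm (Fin m) =>
      IsConj p.1 p.2).filter (fun p => p.1.cycleType = M) =
      (Finset.univ.filter fun σ : Equiv.Perm (Fin m) => σ.cycleType = M) ×ˢ
      (Finset.univ.filter fun σ : Equiv.Perm (Fin m) => σ.cycleType = M) := by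
    ext ⟨σ, τ⟩
    simp only [Finset.mem_filter, Finset.mem_product, Finset.mem_univ, true_and,
      Equiv.Perm.isConj_iff_cycleType_eq]
    constructor
    · rintro ⟨hc, h1⟩
      exact ⟨h1, by rw [← hc]; exact h1⟩
    · rintro ⟨h1, h2⟩
      exact ⟨h1.trans h2.symm, h1⟩
  rw [hpr, Finset.card_product]
  simp [cnt, sq]

lemma kappaS_eq (m : ℕ) :
    kappaS m = (∑ M ∈ Tn m, ((cnt m M : ℝ)) ^ 2) / ((m.factorial : ℝ)) ^ 2 := by
  rw [kappaS, kappa, conj_pairs]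
  have : Nat.card (Equiv.Perm (Fin m)) = m.factorial := by
    simp [Nat.card_eq_fintype_card, Fintype.card_perm, Fintype.card_fin]
  rw [this]
  push_cast
  ring

lemma kappaS_nonneg (m : ℕ) : 0 ≤ kappaS m := by
  rw [kappaS_eq]
  positivity

def scnt (k m : ℕ) : ℕ :=
  (Finset.univ.filter fun σ : Equiv.Perm (Fin m) => ∀ c ∈ σ.cycleType, c < k).card

lemma shortCycleProb_eq {k n : ℕ} (hk : 2 ≤ k) :
    shortCycleProb k n = (scnt k n : ℝ) / (n.factorial : ℝ) := by
  rw [shortCycleProb]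
  congr 1
  norm_cast
  rw [Nat.card_congr (Equiv.subtypeEquivRight (fun σ => forall_minPeriod_lt_iff hk σ)),
    Nat.card_eq_fintype_card, Fintype.card_subtype, scnt]

lemma scnt_fib (k n : ℕ) :
    scnt k n = ∑ M ∈ (Tn n).filter (fun M => ∀ c ∈ M, c < k), cnt n M := by
  rw [scnt, Finset.card_eq_sum_card_fiberwise (f := Equiv.Perm.cycleType)
    (t := (Tn n).filter (fun M => ∀ c ∈ M, c < k)) ?_]
  · apply Finset.sum_congr rfl
    intro M hM
    congr 1
    ext σ
    simp only [Finset.mem_filter, Finset.mem_univ, true_and]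
    constructor
    · rintro ⟨-, h⟩; exact h
    · intro h
      exact ⟨by rw [h]; exact (Finset.mem_filter.1 hM).2, h⟩
  · intro σ hσ
    simp only [Finset.mem_coe, Finset.mem_filter, Finset.mem_univ, true_and] at hσ ⊢
    exact ⟨Finset.mem_image.2 ⟨σ, Finset.mem_univ _, rfl⟩, hσ⟩

def maxp (M : Multiset ℕ) : ℕ :=
  if h : M = 0 then 0 else M.toFinset.max' (by simpa [Multiset.toFinset_nonempty] using h)

lemma maxp_mem {M : Multiset ℕ} (h : M ≠ 0) : maxp M ∈ M := by
  rw [maxp, dif_neg h]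
  exact Multiset.mem_toFinset.1 (Finset.max'_mem _ _)

lemma le_maxp {M : Multiset ℕ} {c : ℕ} (hc : c ∈ M) : c ≤ maxp M := by
  have h : M ≠ 0 := by rintro rfl; simp at hc
  rw [maxp, dif_neg h]
  exact Finset.le_max' _ _ (Multiset.mem_toFinset.2 hc)

end Assembly

open scoped Classical in
theorem kappaS_upper_recurrence (n k : ℕ) (hk : 2 ≤ k) :
    kappaS n ≤ shortCycleProb k n ^ 2 +
      ∑ ℓ ∈ Finset.Icc k n, kappaS (n - ℓ) / (ℓ : ℝ) ^ 2 := by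
  have hN : (0:ℝ) < (n.factorial : ℝ) := by exact_mod_cast n.factorial_pos
  -- the long bound
  have hlong : ∑ M ∈ (Tn n).filter (fun M => ¬ ∀ c ∈ M, c < k), ((cnt n M : ℝ)) ^ 2
      ≤ ∑ ℓ ∈ Finset.Icc k n, (n.factorial : ℝ) ^ 2 * (kappaS (n - ℓ) / (ℓ : ℝ) ^ 2) := by
    have hmaps : ∀ M ∈ (Tn n).filter (fun M => ¬ ∀ c ∈ M, c < k),
        maxp M ∈ Finset.Icc k n := by
      intro M hM
      rw [Finset.mem_filter] at hM
      obtain ⟨hMT, hMns⟩ := hM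
      push_neg at hMns
      obtain ⟨c, hcM, hck⟩ := hMns
      have hM0 : M ≠ 0 := by rintro rfl; simp at hcM
      refine Finset.mem_Icc.2 ⟨hck.trans (le_maxp hcM), ?_⟩
      obtain ⟨σ, -, rfl⟩ := Finset.mem_image.1 hMT
      calc maxp σ.cycleType ≤ σ.support.card :=
            Equiv.Perm.le_card_support_of_mem_cycleType (maxp_mem hM0)
        _ ≤ n := by simpa using Finset.card_le_univ σ.support
    rw [← Finset.sum_fiberwise_of_maps_to hmaps (fun M => ((cnt n M : ℝ)) ^ 2)]
    apply Finset.sum_le_sum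
    intro ℓ hℓ
    rw [Finset.mem_Icc] at hℓ
    have hl2 : 2 ≤ ℓ := le_trans hk hℓ.1
    have hlpos : (0:ℝ) < (ℓ : ℝ) := by exact_mod_cast (by omega : 0 < ℓ)
    have hmem : ∀ M ∈ ((Tn n).filter (fun M => ¬ ∀ c ∈ M, c < k)).filter
        (fun M => maxp M = ℓ), ℓ ∈ M := by
      intro M hM
      simp only [Finset.mem_filter] at hM
      obtain ⟨⟨hMT, hMns⟩, hmax⟩ := hM
      have hM0 : M ≠ 0 := by
        rintro rfl
        exact hMns (by intro c hc; simp at hc)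
      rw [← hmax]; exact maxp_mem hM0
    have hterm : ∀ M ∈ ((Tn n).filter (fun M => ¬ ∀ c ∈ M, c < k)).filter
        (fun M => maxp M = ℓ), ((cnt n M : ℝ)) ^ 2 ≤
        ((n.descFactorial ℓ : ℝ) / (ℓ : ℝ)) ^ 2 * ((cnt (n - ℓ) (M.erase ℓ) : ℝ)) ^ 2 := by
      intro M hM
      have hkey := key_count n ℓ hl2 M (hmem M hM)
      have hkey' : (ℓ : ℝ) * (cnt n M : ℝ) ≤
          (n.descFactorial ℓ : ℝ) * (cnt (n - ℓ) (M.erase ℓ) : ℝ) := by exact_mod_cast hkey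
      have h1 : (cnt n M : ℝ) ≤
          (n.descFactorial ℓ : ℝ) * (cnt (n - ℓ) (M.erase ℓ) : ℝ) / (ℓ : ℝ) := by
        rw [le_div_iff₀ hlpos]; linarith
      calc ((cnt n M : ℝ)) ^ 2
          ≤ ((n.descFactorial ℓ : ℝ) * (cnt (n - ℓ) (M.erase ℓ) : ℝ) / (ℓ : ℝ)) ^ 2 :=
            pow_le_pow_left₀ (by positivity) h1 2
        _ = ((n.descFactorial ℓ : ℝ) / (ℓ : ℝ)) ^ 2 *
            ((cnt (n - ℓ) (M.erase ℓ) : ℝ)) ^ 2 := by ring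
    calc ∑ M ∈ ((Tn n).filter (fun M => ¬ ∀ c ∈ M, c < k)).filter (fun M => maxp M = ℓ),
          ((cnt n M : ℝ)) ^ 2
        ≤ ∑ M ∈ ((Tn n).filter (fun M => ¬ ∀ c ∈ M, c < k)).filter (fun M => maxp M = ℓ),
          ((n.descFactorial ℓ : ℝ) / (ℓ : ℝ)) ^ 2 * ((cnt (n - ℓ) (M.erase ℓ) : ℝ)) ^ 2 :=
          Finset.sum_le_sum hterm
      _ = ((n.descFactorial ℓ : ℝ) / (ℓ : ℝ)) ^ 2 *
          ∑ M ∈ ((Tn n).filter (fun M => ¬ ∀ c ∈ M, c < k)).filter (fun M => maxp M = ℓ),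
          ((cnt (n - ℓ) (M.erase ℓ) : ℝ)) ^ 2 := by rw [← Finset.mul_sum]
      _ ≤ ((n.descFactorial ℓ : ℝ) / (ℓ : ℝ)) ^ 2 *
          ∑ μ ∈ Tn (n - ℓ), ((cnt (n - ℓ) μ : ℝ)) ^ 2 := by
          refine mul_le_mul_of_nonneg_left ?_ (by positivity)
          have himg_eq : ∑ μ ∈ (((Tn n).filter (fun M => ¬ ∀ c ∈ M, c < k)).filter
              (fun M => maxp M = ℓ)).image (fun M => M.erase ℓ), ((cnt (n - ℓ) μ : ℝ)) ^ 2 =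
              ∑ M ∈ ((Tn n).filter (fun M => ¬ ∀ c ∈ M, c < k)).filter
              (fun M => maxp M = ℓ), ((cnt (n - ℓ) (M.erase ℓ) : ℝ)) ^ 2 :=
            Finset.sum_image (fun M hM M' hM' he => by
              have h1 := Multiset.cons_erase (hmem M hM)
              have h2 := Multiset.cons_erase (hmem M' hM')
              rw [← h1, ← h2, he])
          rw [← himg_eq]
          calc ∑ μ ∈ (((Tn n).filter (fun M => ¬ ∀ c ∈ M, c < k)).filter
                (fun M => maxp M = ℓ)).image (fun M => M.erase ℓ), ((cnt (n - ℓ) μ : ℝ)) ^ 2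
              = ∑ μ ∈ ((((Tn n).filter (fun M => ¬ ∀ c ∈ M, c < k)).filter
                (fun M => maxp M = ℓ)).image (fun M => M.erase ℓ)).filter
                (fun μ => μ ∈ Tn (n - ℓ)), ((cnt (n - ℓ) μ : ℝ)) ^ 2 := by
                rw [← Finset.sum_filter_add_sum_filter_not _ (fun μ => μ ∈ Tn (n - ℓ))]
                have hz : ∑ μ ∈ ((((Tn n).filter (fun M => ¬ ∀ c ∈ M, c < k)).filter
                    (fun M => maxp M = ℓ)).image (fun M => M.erase ℓ)).filter
                    (fun μ => μ ∉ Tn (n - ℓ)), ((cnt (n - ℓ) μ : ℝ)) ^ 2 = 0 :=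
                  Finset.sum_eq_zero (fun μ hμ => by
                    rw [cnt_eq_zero_of_not_mem (Finset.mem_filter.1 hμ).2]; norm_num)
                rw [hz, add_zero]
            _ ≤ ∑ μ ∈ Tn (n - ℓ), ((cnt (n - ℓ) μ : ℝ)) ^ 2 :=
                Finset.sum_le_sum_of_subset_of_nonneg
                  (fun μ hμ => (Finset.mem_filter.1 hμ).2) (fun μ _ _ => by positivity)
      _ = (n.factorial : ℝ) ^ 2 * (kappaS (n - ℓ) / (ℓ : ℝ) ^ 2) := by
          have hsum : ∑ μ ∈ Tn (n - ℓ), ((cnt (n - ℓ) μ : ℝ)) ^ 2 =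
              kappaS (n - ℓ) * (((n - ℓ).factorial : ℝ)) ^ 2 := by
            rw [kappaS_eq]
            field_simp
          have hfac : (((n - ℓ).factorial : ℝ)) * ((n.descFactorial ℓ : ℝ)) =
              (n.factorial : ℝ) := by
            exact_mod_cast congrArg Nat.cast (Nat.factorial_mul_descFactorial hℓ.2)
          rw [hsum]
          have hstep : ((n.descFactorial ℓ : ℝ) / (ℓ : ℝ)) ^ 2 *
              (kappaS (n - ℓ) * (((n - ℓ).factorial : ℝ)) ^ 2) =
              ((((n - ℓ).factorial : ℝ)) * ((n.descFactorial ℓ : ℝ))) ^ 2 *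
              (kappaS (n - ℓ) / (ℓ : ℝ) ^ 2) := by ring
          rw [hstep, hfac]
  -- the short bound
  have hshort : ∑ M ∈ (Tn n).filter (fun M => ∀ c ∈ M, c < k), ((cnt n M : ℝ)) ^ 2 ≤
      ((scnt k n : ℝ)) ^ 2 := by
    calc ∑ M ∈ (Tn n).filter (fun M => ∀ c ∈ M, c < k), ((cnt n M : ℝ)) ^ 2
        ≤ (∑ M ∈ (Tn n).filter (fun M => ∀ c ∈ M, c < k), (cnt n M : ℝ)) ^ 2 :=
          Finset.sum_sq_le_sq_sum_of_nonneg (fun M _ => by positivity)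
      _ = ((scnt k n : ℝ)) ^ 2 := by
          congr 1
          rw [scnt_fib]
          push_cast
          rfl
  -- combine
  rw [kappaS_eq, shortCycleProb_eq hk,
    ← Finset.sum_filter_add_sum_filter_not (Tn n) (fun M => ∀ c ∈ M, c < k)
      (fun M => ((cnt n M : ℝ)) ^ 2)]
  have hEq : (((scnt k n : ℝ)) ^ 2 + ∑ ℓ ∈ Finset.Icc k n,
      (n.factorial : ℝ) ^ 2 * (kappaS (n - ℓ) / (ℓ : ℝ) ^ 2)) / ((n.factorial : ℝ)) ^ 2 =
      ((scnt k n : ℝ) / (n.factorial : ℝ)) ^ 2 +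
      ∑ ℓ ∈ Finset.Icc k n, kappaS (n - ℓ) / (ℓ : ℝ) ^ 2 := by
    rw [add_div, Finset.sum_div, div_pow]
    congr 1
    apply Finset.sum_congr rfl
    intro ℓ _
    rw [mul_comm, mul_div_assoc, div_self (by positivity), mul_one]
  rw [← hEq]
  gcongr ?_ / _
  exact add_le_add hshort hlong
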